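/- For the Leibniz algebra L = sl_2 ∔ I with the multiplication table of Theorem 2.3, the ideal generated by squares equals the span of {x_0,...,x_m}, and the only ideals of L are 0, I, and L; moreover [L,L] ≠ I, so L is a simple Leibniz algebra. -/

import Mathlib

open Finset

/-- Basis index type: `Sum.inl 0 = e`, `Sum.inl 1 = f`, `Sum.inl 2 = h`,
`Sum.inr k = x_k`. -/
abbrev BasisIdx (m : ℕ) : Type := Fin 3 ⊕ Fin (m + 1)

/-- The underlying vector space of the `(m+4)`-dimensional algebra. -/
def Lm (m : ℕ) : Type := BasisIdx m → ℂ

noncomputable instance (m : ℕ) : AddCommGroup (Lm m) := Pi.addCommGroup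
noncomputable instance (m : ℕ) : Module ℂ (Lm m) := Pi.module _ _ _
instance (m : ℕ) : FiniteDimensional ℂ (Lm m) := Module.Finite.pi (ι := BasisIdx m)

/-- The basis vectors. -/
noncomputable def bas (m : ℕ) (i : BasisIdx m) : Lm m := Pi.single i 1

/-- Structure constants of the simple Leibniz algebra with associated Lie algebra
`sl₂`:  `[x_k,e] = -k(m+1-k)x_{k-1}`, `[x_k,f] = x_{k+1}`, `[x_k,h] = (m-2k)x_k`,
`[e,h] = 2e = -[h,e]`, `[h,f] = 2f = -[f,h]`, `[e,f] = h = -[f,e]`,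
all other products of basis vectors being zero. -/
noncomputable def sc (m : ℕ) : BasisIdx m → BasisIdx m → Lm m
  | Sum.inr k, Sum.inl ⟨0, _⟩ =>
      (-((k : ℂ) * ((m : ℂ) + 1 - (k : ℂ)))) •
        bas m (Sum.inr ⟨(k : ℕ) - 1, Nat.lt_of_le_of_lt (Nat.sub_le _ _) k.isLt⟩)
  | Sum.inr k, Sum.inl ⟨1, _⟩ =>
      if h : (k : ℕ) < m then bas m (Sum.inr ⟨(k : ℕ) + 1, by omega⟩) else 0
  | Sum.inr k, Sum.inl ⟨2, _⟩ => ((m : ℂ) - 2 * (k : ℂ)) • bas m (Sum.inr k)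
  | Sum.inl ⟨0, _⟩, Sum.inl ⟨2, _⟩ => (2 : ℂ) • bas m (Sum.inl 0)
  | Sum.inl ⟨2, _⟩, Sum.inl ⟨0, _⟩ => (-2 : ℂ) • bas m (Sum.inl 0)
  | Sum.inl ⟨2, _⟩, Sum.inl ⟨1, _⟩ => (2 : ℂ) • bas m (Sum.inl 1)
  | Sum.inl ⟨1, _⟩, Sum.inl ⟨2, _⟩ => (-2 : ℂ) • bas m (Sum.inl 1)
  | Sum.inl ⟨0, _⟩, Sum.inl ⟨1, _⟩ => bas m (Sum.inl 2)
  | Sum.inl ⟨1, _⟩, Sum.inl ⟨0, _⟩ => -bas m (Sum.inl 2)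
  | _, _ => 0

/-- The bilinear bracket of the algebra, extended from the structure constants. -/
noncomputable def br (m : ℕ) (x y : Lm m) : Lm m :=
  ∑ i : BasisIdx m, ∑ j : BasisIdx m, (x i * y j) • sc m i j

namespace Stmt6

variable {m : ℕ}

@[simp] lemma smul_ap (c : ℂ) (v : Lm m) (p : BasisIdx m) : (c • v) p = c * v p := rfl
@[simp] lemma add_ap (v w : Lm m) (p : BasisIdx m) : (v + w) p = v p + w p := rfl
@[simp] lemma neg_ap (v : Lm m) (p : BasisIdx m) : (-v) p = -(v p) := rfl
@[simp] lemma zero_ap (p : BasisIdx m) : (0 : Lm m) p = 0 := rfl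

lemma sum_ap {ι : Type*} (s : Finset ι) (f : ι → Lm m) (p : BasisIdx m) :
    (∑ i ∈ s, f i) p = ∑ i ∈ s, f i p := by
  classical
  induction s using Finset.induction with
  | empty => simp
  | insert _ _ h ih => rw [Finset.sum_insert h, Finset.sum_insert h, add_ap, ih]

lemma bas_ap (i p : BasisIdx m) : bas m i p = if p = i then 1 else 0 :=
  Pi.single_apply i 1 p

@[simp] lemma bas_ap_self (i : BasisIdx m) : bas m i i = 1 := by simp [bas_ap]

lemma bas_ap_ne {i p : BasisIdx m} (h : p ≠ i) : bas m i p = 0 := by simp [bas_ap, h]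

lemma br_ap (x y : Lm m) (p : BasisIdx m) :
    br m x y p = ∑ i : BasisIdx m, ∑ j : BasisIdx m, x i * y j * sc m i j p := by
  rw [br, sum_ap]
  refine Finset.sum_congr rfl fun i _ => ?_
  rw [sum_ap]
  refine Finset.sum_congr rfl fun j _ => ?_
  rw [smul_ap, mul_assoc]




variable {m : ℕ}

lemma sc_xe (k : Fin (m+1)) : sc m (Sum.inr k) (Sum.inl 0) =
    (-((k : ℂ) * ((m : ℂ) + 1 - (k : ℂ)))) •
      bas m (Sum.inr ⟨(k : ℕ) - 1, Nat.lt_of_le_of_lt (Nat.sub_le _ _) k.isLt⟩) := rfl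

lemma sc_xf (k : Fin (m+1)) : sc m (Sum.inr k) (Sum.inl 1) =
    if h : (k : ℕ) < m then bas m (Sum.inr ⟨(k : ℕ) + 1, by omega⟩) else 0 := rfl

lemma sc_xh (k : Fin (m+1)) : sc m (Sum.inr k) (Sum.inl 2) =
    ((m : ℂ) - 2 * (k : ℂ)) • bas m (Sum.inr k) := rfl

@[simp] lemma sc_xx (k k' : Fin (m+1)) : sc m (Sum.inr k) (Sum.inr k') = 0 := rfl
@[simp] lemma sc_ex (k : Fin (m+1)) : sc m (Sum.inl 0) (Sum.inr k) = 0 := rfl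
@[simp] lemma sc_fx (k : Fin (m+1)) : sc m (Sum.inl 1) (Sum.inr k) = 0 := rfl
@[simp] lemma sc_hx (k : Fin (m+1)) : sc m (Sum.inl 2) (Sum.inr k) = 0 := rfl

@[simp] lemma sc_ee : sc m (Sum.inl 0) (Sum.inl 0) = 0 := rfl
@[simp] lemma sc_ff : sc m (Sum.inl 1) (Sum.inl 1) = 0 := rfl
@[simp] lemma sc_hh : sc m (Sum.inl 2) (Sum.inl 2) = 0 := rfl
lemma sc_ef : sc m (Sum.inl 0) (Sum.inl 1) = bas m (Sum.inl 2) := rfl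
lemma sc_fe : sc m (Sum.inl 1) (Sum.inl 0) = -bas m (Sum.inl 2) := rfl
lemma sc_eh : sc m (Sum.inl 0) (Sum.inl 2) = (2 : ℂ) • bas m (Sum.inl 0) := rfl
lemma sc_he : sc m (Sum.inl 2) (Sum.inl 0) = (-2 : ℂ) • bas m (Sum.inl 0) := rfl
lemma sc_hf : sc m (Sum.inl 2) (Sum.inl 1) = (2 : ℂ) • bas m (Sum.inl 1) := rfl
lemma sc_fh : sc m (Sum.inl 1) (Sum.inl 2) = (-2 : ℂ) • bas m (Sum.inl 1) := rfl

lemma sc_xe_ap (k : Fin (m+1)) (p : BasisIdx m) : sc m (Sum.inr k) (Sum.inl 0) p =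
    (-((k : ℂ) * ((m : ℂ) + 1 - (k : ℂ)))) *
      (if p = Sum.inr ⟨(k : ℕ) - 1, Nat.lt_of_le_of_lt (Nat.sub_le _ _) k.isLt⟩ then 1 else 0) := by
  rw [sc_xe, smul_ap, bas_ap]

lemma sc_xf_ap (k : Fin (m+1)) (p : BasisIdx m) : sc m (Sum.inr k) (Sum.inl 1) p =
    if h : (k : ℕ) < m then (if p = Sum.inr ⟨(k : ℕ) + 1, by omega⟩ then 1 else 0) else 0 := by
  rw [sc_xf]; split
  · rw [bas_ap]
  · rfl

lemma sc_xh_ap (k : Fin (m+1)) (p : BasisIdx m) : sc m (Sum.inr k) (Sum.inl 2) p =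
    ((m : ℂ) - 2 * (k : ℂ)) * (if p = Sum.inr k then 1 else 0) := by
  rw [sc_xh, smul_ap, bas_ap]

lemma br_ap_inl0 (x y : Lm m) : br m x y (Sum.inl 0) =
    2 * (x (Sum.inl 0) * y (Sum.inl 2)) - 2 * (x (Sum.inl 2) * y (Sum.inl 0)) := by
  rw [br_ap]
  simp only [Fintype.sum_sum_type, Fin.sum_univ_three, sc_xx, sc_ex, sc_fx, sc_hx,
    sc_ee, sc_ff, sc_hh, sc_ef, sc_fe, sc_eh, sc_he, sc_hf, sc_fh,
    sc_xe_ap, sc_xf_ap, sc_xh_ap, zero_ap, smul_ap, neg_ap, bas_ap,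
    mul_zero, mul_one, Finset.sum_const_zero, add_zero, zero_add, reduceCtorEq,
    if_false, dite_eq_ite, ite_self, Sum.inl.injEq, Fin.reduceEq]
  norm_num
  ring

lemma br_ap_inl1 (x y : Lm m) : br m x y (Sum.inl 1) =
    2 * (x (Sum.inl 2) * y (Sum.inl 1)) - 2 * (x (Sum.inl 1) * y (Sum.inl 2)) := by
  rw [br_ap]
  simp only [Fintype.sum_sum_type, Fin.sum_univ_three, sc_xx, sc_ex, sc_fx, sc_hx,
    sc_ee, sc_ff, sc_hh, sc_ef, sc_fe, sc_eh, sc_he, sc_hf, sc_fh,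
    sc_xe_ap, sc_xf_ap, sc_xh_ap, zero_ap, smul_ap, neg_ap, bas_ap,
    mul_zero, mul_one, Finset.sum_const_zero, add_zero, zero_add, reduceCtorEq,
    if_false, dite_eq_ite, ite_self, Sum.inl.injEq, Fin.reduceEq]
  norm_num
  ring

lemma br_ap_inl2 (x y : Lm m) : br m x y (Sum.inl 2) =
    x (Sum.inl 0) * y (Sum.inl 1) - x (Sum.inl 1) * y (Sum.inl 0) := by
  rw [br_ap]
  simp only [Fintype.sum_sum_type, Fin.sum_univ_three, sc_xx, sc_ex, sc_fx, sc_hx,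
    sc_ee, sc_ff, sc_hh, sc_ef, sc_fe, sc_eh, sc_he, sc_hf, sc_fh,
    sc_xe_ap, sc_xf_ap, sc_xh_ap, zero_ap, smul_ap, neg_ap, bas_ap,
    mul_zero, mul_one, Finset.sum_const_zero, add_zero, zero_add, reduceCtorEq,
    if_false, dite_eq_ite, ite_self, Sum.inl.injEq, Fin.reduceEq]
  norm_num
  ring



lemma sum_e (x y : Lm m) (t : Fin (m+1)) :
    ∑ k : Fin (m+1), x (Sum.inr k) * y (Sum.inl 0) * sc m (Sum.inr k) (Sum.inl 0) (Sum.inr t)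
      = if ht : (t : ℕ) < m then
          (-((((t : ℕ) : ℂ)+1) * ((m : ℂ) - ((t : ℕ) : ℂ)))) *
            (x (Sum.inr ⟨(t : ℕ)+1, by omega⟩) * y (Sum.inl 0))
        else 0 := by
  have side : ∀ b : Fin (m+1), ((b : ℕ) - 1 = (t : ℕ) → (b : ℕ) = 0) →
      x (Sum.inr b) * y (Sum.inl 0) * sc m (Sum.inr b) (Sum.inl 0) (Sum.inr t) = 0 := by
    intro b hb
    rw [sc_xe_ap]
    by_cases hbt : (Sum.inr t : BasisIdx m)
        = Sum.inr ⟨(b : ℕ) - 1, Nat.lt_of_le_of_lt (Nat.sub_le _ _) b.isLt⟩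
    · have h1 : (b : ℕ) - 1 = (t : ℕ) := by
        have := Sum.inr.inj hbt; exact (congrArg Fin.val this).symm
      have h0 : ((b : ℕ) : ℂ) = 0 := by rw [hb h1]; norm_num
      rw [if_pos hbt, h0]; ring
    · rw [if_neg hbt]; ring
  by_cases ht : (t : ℕ) < m
  · rw [dif_pos ht]
    rw [Finset.sum_eq_single (⟨(t : ℕ)+1, by omega⟩ : Fin (m+1))]
    · have hc : (Sum.inr t : BasisIdx m) = Sum.inr ⟨((⟨(t : ℕ)+1, by omega⟩ : Fin (m+1)) : ℕ) - 1,
          Nat.lt_of_le_of_lt (Nat.sub_le _ _) (Fin.isLt _)⟩ := by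
        exact congrArg Sum.inr (by apply Fin.ext; simp)
      rw [sc_xe_ap, if_pos hc]
      push_cast
      ring
    · intro b _ hb
      apply side
      intro h1
      by_contra h0
      exact hb (by apply Fin.ext; simp; omega)
    · intro h; exact absurd (Finset.mem_univ _) h
  · rw [dif_neg ht]
    apply Finset.sum_eq_zero
    intro b _
    apply side
    intro h1
    have : (t : ℕ) = m := by omega
    omega


lemma sum_f (x y : Lm m) (t : Fin (m+1)) :
    ∑ k : Fin (m+1), x (Sum.inr k) * y (Sum.inl 1) * sc m (Sum.inr k) (Sum.inl 1) (Sum.inr t)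
      = if ht : 0 < (t : ℕ) then x (Sum.inr ⟨(t : ℕ) - 1, by omega⟩) * y (Sum.inl 1) else 0 := by
  have side : ∀ b : Fin (m+1), (t : ℕ) ≠ (b : ℕ) + 1 →
      x (Sum.inr b) * y (Sum.inl 1) * sc m (Sum.inr b) (Sum.inl 1) (Sum.inr t) = 0 := by
    intro b hb
    rw [sc_xf_ap]
    by_cases hbm : (b : ℕ) < m
    · rw [dif_pos hbm, if_neg, mul_zero]
      intro hc
      exact hb (congrArg Fin.val (Sum.inr.inj hc))
    · rw [dif_neg hbm, mul_zero]
  by_cases ht : 0 < (t : ℕ)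
  · rw [dif_pos ht]
    rw [Finset.sum_eq_single (⟨(t : ℕ) - 1, by omega⟩ : Fin (m+1))]
    · rw [sc_xf_ap, dif_pos (by simp; omega), if_pos (congrArg Sum.inr (by apply Fin.ext; simp; omega)),
        mul_one]
    · intro b _ hb
      apply side
      intro h1
      exact hb (by apply Fin.ext; simp; omega)
    · intro h; exact absurd (Finset.mem_univ _) h
  · rw [dif_neg ht]
    exact Finset.sum_eq_zero fun b _ => side b (by omega)

lemma sum_h (x y : Lm m) (t : Fin (m+1)) :
    ∑ k : Fin (m+1), x (Sum.inr k) * y (Sum.inl 2) * sc m (Sum.inr k) (Sum.inl 2) (Sum.inr t)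
      = ((m : ℂ) - 2 * ((t : ℕ) : ℂ)) * (x (Sum.inr t) * y (Sum.inl 2)) := by
  rw [Finset.sum_eq_single t]
  · rw [sc_xh_ap, if_pos rfl, mul_one]; ring
  · intro b _ hb
    rw [sc_xh_ap, if_neg (fun hc => hb (Sum.inr.inj hc).symm), mul_zero, mul_zero]
  · intro h; exact absurd (Finset.mem_univ _) h

lemma br_ap_inr (x y : Lm m) (t : Fin (m+1)) : br m x y (Sum.inr t) =
    (if ht : (t : ℕ) < m then
        (-((((t : ℕ) : ℂ)+1) * ((m : ℂ) - ((t : ℕ) : ℂ)))) *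
          (x (Sum.inr ⟨(t : ℕ)+1, by omega⟩) * y (Sum.inl 0))
      else 0)
    + (if ht : 0 < (t : ℕ) then x (Sum.inr ⟨(t : ℕ) - 1, by omega⟩) * y (Sum.inl 1) else 0)
    + ((m : ℂ) - 2 * ((t : ℕ) : ℂ)) * (x (Sum.inr t) * y (Sum.inl 2)) := by
  rw [br_ap]
  simp only [Fintype.sum_sum_type, Fin.sum_univ_three, sc_xx, sc_ex, sc_fx, sc_hx,
    sc_ee, sc_ff, sc_hh, sc_ef, sc_fe, sc_eh, sc_he, sc_hf, sc_fh,
    zero_ap, smul_ap, neg_ap, bas_ap,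
    mul_zero, mul_one, Finset.sum_const_zero, add_zero, zero_add, reduceCtorEq,
    if_false, Fin.reduceEq, neg_zero]
  simp only [Finset.sum_add_distrib]
  rw [sum_e, sum_f, sum_h]


def inK (a : Lm m) : Prop := ∀ j : Fin 3, a (Sum.inl j) = 0

lemma inK_of {a : Lm m} (h0 : a (Sum.inl 0) = 0) (h1 : a (Sum.inl 1) = 0)
    (h2 : a (Sum.inl 2) = 0) : inK a := by
  intro j
  match j with
  | 0 => exact h0
  | 1 => exact h1
  | 2 => exact h2

lemma inK_bas_inr (k : Fin (m+1)) : inK (bas m (Sum.inr k)) := by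
  intro j; rw [bas_ap, if_neg (by simp)]

lemma br_right_zero {a : Lm m} (ha : inK a) (y : Lm m) : br m y a = 0 := by
  have h0 := ha 0; have h1 := ha 1; have h2 := ha 2
  funext p
  match p with
  | Sum.inl j =>
    match j with
    | 0 => show br m y a (Sum.inl 0) = 0; rw [br_ap_inl0, h0, h2]; ring
    | 1 => show br m y a (Sum.inl 1) = 0; rw [br_ap_inl1, h1, h2]; ring
    | 2 => show br m y a (Sum.inl 2) = 0; rw [br_ap_inl2, h0, h1]; ring
  | Sum.inr t =>
    show br m y a (Sum.inr t) = 0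
    rw [br_ap_inr, h0, h1, h2]
    simp

lemma br_left_inK {a : Lm m} (ha : inK a) (y : Lm m) : inK (br m a y) := by
  have h0 := ha 0; have h1 := ha 1; have h2 := ha 2
  apply inK_of
  · rw [br_ap_inl0, h0, h2]; ring
  · rw [br_ap_inl1, h1, h2]; ring
  · rw [br_ap_inl2, h0, h1]; ring

lemma square_inK (x : Lm m) : inK (br m x x) := by
  apply inK_of
  · rw [br_ap_inl0]; ring
  · rw [br_ap_inl1]; ring
  · rw [br_ap_inl2]; ring

/-- decomposition of `x` into its `K`-part and `sl2`-part -/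
def projK (x : Lm m) : Lm m := Sum.rec (fun _ => 0) (fun k => x (Sum.inr k))

lemma inK_projK (x : Lm m) : inK (projK x) := fun _ => rfl

lemma decomp (x : Lm m) : x = projK x + x (Sum.inl 0) • bas m (Sum.inl 0)
    + x (Sum.inl 1) • bas m (Sum.inl 1) + x (Sum.inl 2) • bas m (Sum.inl 2) := by
  funext p
  simp only [add_ap, smul_ap, bas_ap]
  match p with
  | Sum.inl j =>
    match j with
    | 0 => simp [projK]
    | 1 => simp [projK]
    | 2 => simp [projK]
  | Sum.inr t => simp [projK, reduceCtorEq]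

lemma mem_span_of_inK {a : Lm m} (ha : inK a) :
    a ∈ Submodule.span ℂ (Set.range fun k : Fin (m + 1) => bas m (Sum.inr k)) := by
  have : a = ∑ k : Fin (m+1), a (Sum.inr k) • bas m (Sum.inr k) := by
    funext p
    rw [sum_ap]
    match p with
    | Sum.inl j =>
      rw [ha j]
      exact (Finset.sum_eq_zero fun k _ => by rw [smul_ap, bas_ap, if_neg (by simp), mul_zero]).symm
    | Sum.inr t =>
      rw [Finset.sum_eq_single t]
      · rw [smul_ap, bas_ap_self, mul_one]
      · intro b _ hb
        rw [smul_ap, bas_ap, if_neg (fun hc => hb (Sum.inr.inj hc).symm), mul_zero]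
      · intro h; exact absurd (Finset.mem_univ _) h
  rw [this]
  exact Submodule.sum_mem _ fun k _ => Submodule.smul_mem _ _
    (Submodule.subset_span ⟨k, rfl⟩)

lemma inK_of_mem_span {a : Lm m}
    (ha : a ∈ Submodule.span ℂ (Set.range fun k : Fin (m + 1) => bas m (Sum.inr k))) :
    inK a := by
  induction ha using Submodule.span_induction with
  | mem x hx => obtain ⟨k, rfl⟩ := hx; exact inK_bas_inr k
  | zero => intro j; rfl
  | add x y _ _ hx hy => intro j; rw [add_ap, hx j, hy j, add_zero]
  | smul c x _ hx => intro j; rw [smul_ap, hx j, mul_zero]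


lemma bas_f_vals : bas m (Sum.inl 1) (Sum.inl 0) = 0 ∧ bas m (Sum.inl 1) (Sum.inl 1) = 1
    ∧ bas m (Sum.inl 1) (Sum.inl 2) = 0 := by
  refine ⟨?_, ?_, ?_⟩ <;> simp [bas_ap]

lemma br_f_ap (a : Lm m) (t : Fin (m+1)) : br m a (bas m (Sum.inl 1)) (Sum.inr t) =
    if ht : 0 < (t : ℕ) then a (Sum.inr ⟨(t : ℕ) - 1, by omega⟩) else 0 := by
  rw [br_ap_inr, bas_f_vals.1, bas_f_vals.2.1, bas_f_vals.2.2]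
  simp

lemma bas_e_vals : bas m (Sum.inl 0) (Sum.inl 0) = 1 ∧ bas m (Sum.inl 0) (Sum.inl 1) = 0
    ∧ bas m (Sum.inl 0) (Sum.inl 2) = 0 := by
  refine ⟨?_, ?_, ?_⟩ <;> simp [bas_ap]

lemma br_e_ap (a : Lm m) (t : Fin (m+1)) : br m a (bas m (Sum.inl 0)) (Sum.inr t) =
    if ht : (t : ℕ) < m then
      (-((((t : ℕ) : ℂ)+1) * ((m : ℂ) - ((t : ℕ) : ℂ)))) * a (Sum.inr ⟨(t : ℕ)+1, by omega⟩)
    else 0 := by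
  rw [br_ap_inr, bas_e_vals.1, bas_e_vals.2.1, bas_e_vals.2.2]
  simp

lemma bas_h_vals : bas m (Sum.inl 2) (Sum.inl 0) = 0 ∧ bas m (Sum.inl 2) (Sum.inl 1) = 0
    ∧ bas m (Sum.inl 2) (Sum.inl 2) = 1 := by
  refine ⟨?_, ?_, ?_⟩ <;> simp [bas_ap]

lemma br_h_ap (a : Lm m) (t : Fin (m+1)) : br m a (bas m (Sum.inl 2)) (Sum.inr t) =
    ((m : ℂ) - 2 * ((t : ℕ) : ℂ)) * a (Sum.inr t) := by
  rw [br_ap_inr, bas_h_vals.1, bas_h_vals.2.1, bas_h_vals.2.2]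
  simp

def Ide (J : Submodule ℂ (Lm m)) : Prop := ∀ a ∈ J, ∀ y : Lm m, br m a y ∈ J ∧ br m y a ∈ J

lemma mem_of_smul {J : Submodule ℂ (Lm m)} {c : ℂ} (hc : c ≠ 0) {w : Lm m}
    (h : c • w ∈ J) : w ∈ J := by
  have := J.smul_mem c⁻¹ h
  rwa [smul_smul, inv_mul_cancel₀ hc, one_smul] at this

lemma top_mem {J : Submodule ℂ (Lm m)} (hJ : Ide J) : ∀ d : ℕ, ∀ a ∈ J, inK a →
    ∀ (k : ℕ) (hk : k < m + 1), m - k ≤ d →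
    (∀ (l : ℕ) (hl : l < m + 1), l < k → a (Sum.inr ⟨l, hl⟩) = 0) →
    a (Sum.inr ⟨k, hk⟩) ≠ 0 →
    bas m (Sum.inr ⟨m, Nat.lt_succ_self m⟩) ∈ J := by
  have base : ∀ a ∈ J, inK a →
      (∀ (l : ℕ) (hl : l < m + 1), l < m → a (Sum.inr ⟨l, hl⟩) = 0) →
      a (Sum.inr ⟨m, Nat.lt_succ_self m⟩) ≠ 0 →
      bas m (Sum.inr ⟨m, Nat.lt_succ_self m⟩) ∈ J := by
    intro a haJ haK hmin hne
    apply mem_of_smul hne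
    have : (a (Sum.inr ⟨m, Nat.lt_succ_self m⟩)) • bas m (Sum.inr ⟨m, Nat.lt_succ_self m⟩)
        = a := by
      funext p
      rw [smul_ap, bas_ap]
      match p with
      | Sum.inl j => rw [if_neg (by simp), mul_zero, haK j]
      | Sum.inr t =>
        by_cases htm : (t : ℕ) = m
        · have : t = ⟨m, Nat.lt_succ_self m⟩ := Fin.ext htm
          rw [this, if_pos rfl, mul_one]
        · rw [if_neg (fun hc => htm (congrArg Fin.val (Sum.inr.inj hc))), mul_zero,
            hmin t t.isLt (by omega)]
    rw [this]; exact haJ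
  intro d
  induction d with
  | zero =>
    intro a haJ haK k hk hd hmin hne
    have hkm : k = m := by omega
    subst hkm
    exact base a haJ haK hmin hne
  | succ d ih =>
    intro a haJ haK k hk hd hmin hne
    by_cases hkm : k = m
    · subst hkm; exact base a haJ haK hmin hne
    · have hklt : k < m := by omega
      set b := br m a (bas m (Sum.inl 1)) with hb
      have hbJ : b ∈ J := (hJ a haJ _).1
      have hbK : inK b := br_left_inK haK _
      have hbt : ∀ t : Fin (m+1), b (Sum.inr t)
          = if ht : 0 < (t : ℕ) then a (Sum.inr ⟨(t : ℕ) - 1, by omega⟩) else 0 :=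
        fun t => br_f_ap a t
      apply ih b hbJ hbK (k+1) (by omega) (by omega)
      · intro l hl hlk
        rw [hbt ⟨l, hl⟩]
        by_cases h0 : 0 < l
        · rw [dif_pos h0]
          exact hmin (l - 1) (by omega) (by omega)
        · rw [dif_neg h0]
      · rw [hbt ⟨k+1, by omega⟩, dif_pos (Nat.succ_pos k)]
        simpa using hne

lemma lower_mem {J : Submodule ℂ (Lm m)} (hJ : Ide J)
    (htop : bas m (Sum.inr ⟨m, Nat.lt_succ_self m⟩) ∈ J) :
    ∀ (k : ℕ) (hk : k < m + 1), bas m (Sum.inr ⟨k, hk⟩) ∈ J := by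
  have main : ∀ d (k : ℕ) (h : k + d = m), bas m (Sum.inr ⟨k, by omega⟩) ∈ J := by
    intro d
    induction d with
    | zero =>
      intro k h
      have : k = m := by omega
      subst this
      exact htop
    | succ d ih =>
      intro k h
      have hkm : k < m := by omega
      have hb : bas m (Sum.inr ⟨k+1, by omega⟩) ∈ J := ih (k+1) (by omega)
      have hc : br m (bas m (Sum.inr ⟨k+1, by omega⟩)) (bas m (Sum.inl 0)) ∈ J :=
        (hJ _ hb _).1
      have heq : br m (bas m (Sum.inr ⟨k+1, by omega⟩)) (bas m (Sum.inl 0))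
          = (-(((k : ℂ)+1) * ((m : ℂ) - (k : ℂ)))) • bas m (Sum.inr ⟨k, by omega⟩) := by
        funext p
        rw [smul_ap, bas_ap]
        match p with
        | Sum.inl j =>
          rw [if_neg (by simp), mul_zero]
          exact br_left_inK (inK_bas_inr _) _ j
        | Sum.inr t =>
          rw [br_e_ap]
          by_cases htk : (t : ℕ) = k
          · rw [dif_pos (by omega), if_pos (congrArg Sum.inr (Fin.ext htk)), mul_one,
              bas_ap, if_pos (congrArg Sum.inr (Fin.ext (show (t:ℕ)+1 = k+1 by omega))), mul_one, htk]
          · rw [if_neg (fun hc => htk (congrArg Fin.val (Sum.inr.inj hc))), mul_zero]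
            by_cases htm : (t : ℕ) < m
            · rw [dif_pos htm, bas_ap,
                if_neg (fun hc => htk (by have := congrArg Fin.val (Sum.inr.inj hc); simp at this; omega)),
                mul_zero]
            · rw [dif_neg htm]
      rw [heq] at hc
      refine mem_of_smul ?_ hc
      have h1 : ((k : ℂ) + 1) ≠ 0 := by
        have : (((k+1 : ℕ)) : ℂ) ≠ 0 := Nat.cast_ne_zero.mpr (by omega)
        push_cast at this; exact this
      have h2 : ((m : ℂ) - (k : ℂ)) ≠ 0 := by
        have : (((m - k : ℕ)) : ℂ) ≠ 0 := Nat.cast_ne_zero.mpr (by omega)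
        rwa [Nat.cast_sub (by omega)] at this
      simp only [neg_ne_zero]
      exact mul_ne_zero h1 h2
  intro k hk
  have := main (m - k) k (by omega)
  convert this using 2


lemma span_le_of_nonzero_inK {J : Submodule ℂ (Lm m)} (hJ : Ide J)
    {a : Lm m} (haJ : a ∈ J) (hane : a ≠ 0) (haK : inK a) :
    Submodule.span ℂ (Set.range fun k : Fin (m + 1) => bas m (Sum.inr k)) ≤ J := by
  classical
  have hex : ∃ n : ℕ, ∃ h : n < m + 1, a (Sum.inr ⟨n, h⟩) ≠ 0 := by
    by_contra hall
    push_neg at hall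
    apply hane
    funext p
    match p with
    | Sum.inl j => exact haK j
    | Sum.inr t => exact (Fin.eta t t.isLt) ▸ hall t.val t.isLt
  set n₀ := Nat.find hex with hn₀
  obtain ⟨h₀, hne⟩ := Nat.find_spec hex
  have hmin : ∀ (l : ℕ) (hl : l < m + 1), l < n₀ → a (Sum.inr ⟨l, hl⟩) = 0 := by
    intro l hl hln
    have := Nat.find_min hex hln
    push_neg at this
    exact this hl
  have htop := top_mem hJ (m - n₀) a haJ haK n₀ h₀ le_rfl hmin hne
  have hall := lower_mem hJ htop
  rw [Submodule.span_le]
  rintro _ ⟨k, rfl⟩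
  exact (Fin.eta k k.isLt) ▸ hall k.val k.isLt


@[simp] lemma sub_ap (v w : Lm m) (p : BasisIdx m) : (v - w) p = v p - w p := rfl

lemma ext_coords {v w : Lm m} (h0 : v (Sum.inl 0) = w (Sum.inl 0))
    (h1 : v (Sum.inl 1) = w (Sum.inl 1)) (h2 : v (Sum.inl 2) = w (Sum.inl 2))
    (hr : ∀ t : Fin (m+1), v (Sum.inr t) = w (Sum.inr t)) : v = w :=
  funext fun p => match p with
    | Sum.inl 0 => h0
    | Sum.inl 1 => h1
    | Sum.inl 2 => h2
    | Sum.inr t => hr t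

lemma bas_ne_zero (i : BasisIdx m) : bas m i ≠ 0 := by
  intro h
  have := congrFun h i
  rw [bas_ap_self] at this
  exact one_ne_zero this

/-- `br e f = h` -/
lemma br_ef : br m (bas m (Sum.inl 0)) (bas m (Sum.inl 1)) = bas m (Sum.inl 2) := by
  apply ext_coords
  · rw [br_ap_inl0, bas_e_vals.1, bas_e_vals.2.2, bas_f_vals.1, bas_f_vals.2.2, bas_ap]
    simp
  · rw [br_ap_inl1, bas_e_vals.2.1, bas_e_vals.2.2, bas_f_vals.2.1, bas_f_vals.2.2, bas_ap]
    simp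
  · rw [br_ap_inl2, bas_e_vals.1, bas_e_vals.2.1, bas_f_vals.1, bas_f_vals.2.1, bas_ap]
    simp
  · intro t
    rw [br_ap_inr]
    have hz : ∀ t' : Fin (m+1), bas m (Sum.inl 0) (Sum.inr t') = 0 :=
      fun t' => bas_ap_ne (by simp)
    rw [bas_ap_ne (show (Sum.inr t : BasisIdx m) ≠ Sum.inl 2 by simp)]
    rw [bas_f_vals.1, bas_f_vals.2.1, bas_f_vals.2.2]
    simp [hz]

/-- `br e h = 2e` -/
lemma br_eh : br m (bas m (Sum.inl 0)) (bas m (Sum.inl 2)) = (2 : ℂ) • bas m (Sum.inl 0) := by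
  apply ext_coords
  · rw [br_ap_inl0, bas_e_vals.1, bas_e_vals.2.2, bas_h_vals.1, bas_h_vals.2.2, smul_ap,
      bas_ap_self]
    ring
  · rw [br_ap_inl1, bas_e_vals.2.1, bas_e_vals.2.2, bas_h_vals.2.1, bas_h_vals.2.2, smul_ap,
      bas_ap_ne (by simp)]
    ring
  · rw [br_ap_inl2, bas_e_vals.1, bas_e_vals.2.1, bas_h_vals.1, bas_h_vals.2.1, smul_ap,
      bas_ap_ne (by simp)]
    ring
  · intro t
    rw [br_ap_inr, smul_ap]
    have hz : ∀ t' : Fin (m+1), bas m (Sum.inl 0) (Sum.inr t') = 0 :=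
      fun t' => bas_ap_ne (by simp)
    rw [bas_ap_ne (show (Sum.inr t : BasisIdx m) ≠ Sum.inl 0 by simp)]
    rw [bas_h_vals.1, bas_h_vals.2.1]
    simp [hz]

/-- `br f h = -2f` -/
lemma br_fh : br m (bas m (Sum.inl 1)) (bas m (Sum.inl 2)) = (-2 : ℂ) • bas m (Sum.inl 1) := by
  apply ext_coords
  · rw [br_ap_inl0, bas_f_vals.1, bas_f_vals.2.2, bas_h_vals.1, bas_h_vals.2.2, smul_ap,
      bas_ap_ne (by simp)]
    ring
  · rw [br_ap_inl1, bas_f_vals.2.1, bas_f_vals.2.2, bas_h_vals.2.1, bas_h_vals.2.2, smul_ap,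
      bas_ap_self]
    ring
  · rw [br_ap_inl2, bas_f_vals.1, bas_f_vals.2.1, bas_h_vals.1, bas_h_vals.2.1, smul_ap,
      bas_ap_ne (by simp)]
    ring
  · intro t
    rw [br_ap_inr, smul_ap]
    have hz : ∀ t' : Fin (m+1), bas m (Sum.inl 1) (Sum.inr t') = 0 :=
      fun t' => bas_ap_ne (by simp)
    rw [bas_ap_ne (show (Sum.inr t : BasisIdx m) ≠ Sum.inl 1 by simp)]
    rw [bas_h_vals.1, bas_h_vals.2.1]
    simp [hz]


lemma eq_top_of_h_comp (hm : 2 ≤ m) {J : Submodule ℂ (Lm m)} (hJ : Ide J)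
    {c : Lm m} (hcJ : c ∈ J) (hc2 : c (Sum.inl 2) ≠ 0) : J = ⊤ := by
  -- step 1 : d = br x₀ c has nonzero x₀-coefficient, lies in J and in K
  set x0 : Lm m := bas m (Sum.inr ⟨0, Nat.succ_pos m⟩) with hx0
  have hdJ : br m x0 c ∈ J := (hJ c hcJ x0).2
  have hdK : inK (br m x0 c) := br_left_inK (inK_bas_inr _) c
  have hd0 : br m x0 c (Sum.inr ⟨0, Nat.succ_pos m⟩) = (m : ℂ) * c (Sum.inl 2) := by
    rw [br_ap_inr]
    rw [dif_pos (show ((⟨0, Nat.succ_pos m⟩ : Fin (m+1)) : ℕ) < m by simpa using by omega)]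
    rw [dif_neg (by simp)]
    rw [hx0, bas_ap_ne (show (Sum.inr ⟨0+1, _⟩ : BasisIdx m) ≠ Sum.inr ⟨0, Nat.succ_pos m⟩ by
      intro hc'; exact absurd (congrArg Fin.val (Sum.inr.inj hc')) (by simp)),
      bas_ap_self]
    push_cast
    ring
  have hdne : br m x0 c ≠ 0 := by
    intro h
    rw [h] at hd0
    have hm0 : (m : ℂ) ≠ 0 := Nat.cast_ne_zero.mpr (by omega)
    exact (mul_ne_zero hm0 hc2) (by rw [← hd0]; rfl)
  have hIJ : Submodule.span ℂ (Set.range fun k : Fin (m + 1) => bas m (Sum.inr k)) ≤ J :=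
    span_le_of_nonzero_inK hJ hdJ hdne hdK
  -- step 2 : s = c - projK c ∈ J, has zero inr components
  have hpc : projK c ∈ J := hIJ (mem_span_of_inK (inK_projK c))
  set s : Lm m := c - projK c with hs
  have hsJ : s ∈ J := J.sub_mem hcJ hpc
  have hs0 : s (Sum.inl 0) = c (Sum.inl 0) := by rw [hs, sub_ap]; simp [projK]
  have hs1 : s (Sum.inl 1) = c (Sum.inl 1) := by rw [hs, sub_ap]; simp [projK]
  have hs2 : s (Sum.inl 2) = c (Sum.inl 2) := by rw [hs, sub_ap]; simp [projK]
  have hsr : ∀ t : Fin (m+1), s (Sum.inr t) = 0 := by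
    intro t; rw [hs, sub_ap]; simp [projK]
  -- step 3 : bracket twice with h to isolate components
  set s1 : Lm m := br m s (bas m (Sum.inl 2)) with hs1d
  have hs1J : s1 ∈ J := (hJ s hsJ _).1
  have hs1_0 : s1 (Sum.inl 0) = 2 * s (Sum.inl 0) := by
    rw [hs1d, br_ap_inl0, bas_h_vals.1, bas_h_vals.2.2]; ring
  have hs1_1 : s1 (Sum.inl 1) = -2 * s (Sum.inl 1) := by
    rw [hs1d, br_ap_inl1, bas_h_vals.2.1, bas_h_vals.2.2]; ring
  have hs1_2 : s1 (Sum.inl 2) = 0 := by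
    rw [hs1d, br_ap_inl2, bas_h_vals.1, bas_h_vals.2.1]; ring
  have hs1_r : ∀ t : Fin (m+1), s1 (Sum.inr t) = 0 := by
    intro t; rw [hs1d, br_h_ap, hsr t, mul_zero]
  set s2 : Lm m := br m s1 (bas m (Sum.inl 2)) with hs2d
  have hs2J : s2 ∈ J := (hJ s1 hs1J _).1
  have hs2_0 : s2 (Sum.inl 0) = 4 * s (Sum.inl 0) := by
    rw [hs2d, br_ap_inl0, bas_h_vals.1, bas_h_vals.2.2, hs1_0]; ring
  have hs2_1 : s2 (Sum.inl 1) = 4 * s (Sum.inl 1) := by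
    rw [hs2d, br_ap_inl1, bas_h_vals.2.1, bas_h_vals.2.2, hs1_1]; ring
  have hs2_2 : s2 (Sum.inl 2) = 0 := by
    rw [hs2d, br_ap_inl2, bas_h_vals.1, bas_h_vals.2.1]; ring
  have hs2_r : ∀ t : Fin (m+1), s2 (Sum.inr t) = 0 := by
    intro t; rw [hs2d, br_h_ap, hs1_r t, mul_zero]
  -- w = s - 8⁻¹ • (s2 + 2s1) - 8⁻¹ • (s2 - 2s1) = γ • h
  set w : Lm m := s - (8:ℂ)⁻¹ • (s2 + (2:ℂ) • s1) - (8:ℂ)⁻¹ • (s2 - (2:ℂ) • s1) with hw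
  have hwJ : w ∈ J := J.sub_mem (J.sub_mem hsJ (J.smul_mem _ (J.add_mem hs2J (J.smul_mem _ hs1J))))
    (J.smul_mem _ (J.sub_mem hs2J (J.smul_mem _ hs1J)))
  have hweq : w = c (Sum.inl 2) • bas m (Sum.inl 2) := by
    apply ext_coords
    · rw [hw]
      simp only [sub_ap, smul_ap, add_ap, smul_ap]
      rw [hs2_0, hs1_0, bas_ap_ne (by simp)]
      ring
    · rw [hw]
      simp only [sub_ap, smul_ap, add_ap, smul_ap]
      rw [hs2_1, hs1_1, bas_ap_ne (by simp)]
      ring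
    · rw [hw]
      simp only [sub_ap, smul_ap, add_ap, smul_ap]
      rw [hs2_2, hs1_2, hs2, bas_ap_self]
      ring
    · intro t
      rw [hw]
      simp only [sub_ap, smul_ap, add_ap, smul_ap]
      rw [hs2_r, hs1_r, hsr, bas_ap_ne (by simp)]
      ring
  have hhJ : bas m (Sum.inl 2) ∈ J := by
    apply mem_of_smul hc2
    rw [← hweq]; exact hwJ
  have heJ : bas m (Sum.inl 0) ∈ J := by
    apply mem_of_smul (show (2:ℂ) ≠ 0 by norm_num)
    rw [← br_eh]
    exact (hJ _ hhJ _).2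
  have hfJ : bas m (Sum.inl 1) ∈ J := by
    apply mem_of_smul (show (-2:ℂ) ≠ 0 by norm_num)
    rw [← br_fh]
    exact (hJ _ hhJ _).2
  rw [eq_top_iff]
  intro x _
  rw [decomp (m := m) x]
  exact J.add_mem (J.add_mem (J.add_mem (hIJ (mem_span_of_inK (inK_projK x)))
    (J.smul_mem _ heJ)) (J.smul_mem _ hfJ)) (J.smul_mem _ hhJ)

end Stmt6

open Stmt6

/-- For the algebra `L = sl₂ ∔ I` of Theorem 2.3, the ideal generated by squares
equals `I = span{x_0,…,x_m}`, the only ideals of `L` are `0`, `I` and `L`, and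
`[L,L] ≠ I`; hence `L` is a simple Leibniz algebra. -/
theorem stmt6 (m : ℕ) (hm : 2 ≤ m) :
    let Isub : Submodule ℂ (Lm m) :=
      Submodule.span ℂ (Set.range fun k : Fin (m + 1) => bas m (Sum.inr k))
    let IsIdeal : Submodule ℂ (Lm m) → Prop := fun J =>
      ∀ a ∈ J, ∀ y : Lm m, br m a y ∈ J ∧ br m y a ∈ J
    sInf {J : Submodule ℂ (Lm m) | IsIdeal J ∧ ∀ x : Lm m, br m x x ∈ J} = Isub ∧
      (∀ J : Submodule ℂ (Lm m), IsIdeal J → J = ⊥ ∨ J = Isub ∨ J = ⊤) ∧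
      Submodule.span ℂ {a : Lm m | ∃ x y : Lm m, a = br m x y} ≠ Isub := by
  intro Isub IsIdeal
  classical
  refine ⟨?_, ?_, ?_⟩
  · -- sInf of ideals containing squares = Isub
    apply le_antisymm
    · apply sInf_le
      constructor
      · intro a ha y
        refine ⟨mem_span_of_inK (br_left_inK (inK_of_mem_span ha) y), ?_⟩
        rw [br_right_zero (inK_of_mem_span ha)]
        exact Submodule.zero_mem _
      · exact fun x => mem_span_of_inK (square_inK x)
    · apply le_sInf
      rintro J ⟨hJi, hsq⟩
      set z : Lm m := bas m (Sum.inr ⟨0, Nat.succ_pos m⟩) + bas m (Sum.inl 1) with hzdef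
      have hz0 : z (Sum.inl 0) = 0 := by
        rw [hzdef, add_ap, bas_ap_ne (by simp), bas_ap_ne (by simp), add_zero]
      have hz1 : z (Sum.inl 1) = 1 := by
        rw [hzdef, add_ap, bas_ap_ne (by simp), bas_ap_self, zero_add]
      have hz2 : z (Sum.inl 2) = 0 := by
        rw [hzdef, add_ap, bas_ap_ne (by simp), bas_ap_ne (by simp), add_zero]
      have h1m : (1:ℕ) < m + 1 := by omega
      have hzr : ∀ q : Fin (m+1), z (Sum.inr q) = if (q : ℕ) = 0 then 1 else 0 := by
        intro q
        rw [hzdef, add_ap, bas_ap_ne (show (Sum.inr q : BasisIdx m) ≠ Sum.inl 1 by simp),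
          add_zero, bas_ap]
        by_cases hq : (q : ℕ) = 0
        · rw [if_pos (congrArg Sum.inr (Fin.ext hq)), if_pos hq]
        · rw [if_neg (fun hc => hq (congrArg Fin.val (Sum.inr.inj hc))), if_neg hq]
      have hzz : br m z z = bas m (Sum.inr ⟨1, h1m⟩) := by
        apply ext_coords
        · rw [br_ap_inl0, hz0, hz2, bas_ap_ne (by simp)]; ring
        · rw [br_ap_inl1, bas_ap_ne (by simp)]; ring
        · rw [br_ap_inl2, bas_ap_ne (by simp)]; ring
        · intro t
          rw [br_ap_inr, hz0, hz1, hz2, bas_ap]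
          simp only [mul_zero, mul_one, dite_eq_ite, ite_self, zero_add, add_zero]
          by_cases h0 : 0 < (t : ℕ)
          · rw [dif_pos h0, hzr]
            simp only [Fin.val_mk, Sum.inr.injEq, Fin.ext_iff]
            by_cases ht1 : (t : ℕ) = 1
            · rw [if_pos (by omega), if_pos (by omega)]
            · rw [if_neg (by omega), if_neg (by omega)]
          · rw [dif_neg h0]
            simp only [Sum.inr.injEq, Fin.ext_iff, Fin.val_mk]
            rw [if_neg (by omega)]
      have hbJ : bas m (Sum.inr ⟨1, h1m⟩) ∈ J := by rw [← hzz]; exact hsq z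
      exact span_le_of_nonzero_inK hJi hbJ (bas_ne_zero _) (inK_bas_inr _)
  · -- classification of ideals
    intro J hJi
    by_cases hbot : J = ⊥
    · exact Or.inl hbot
    right
    obtain ⟨a, haJ, hane⟩ := (Submodule.ne_bot_iff J).mp hbot
    by_cases hK : ∀ b ∈ J, inK b
    · left
      apply le_antisymm
      · intro b hb
        exact mem_span_of_inK (hK b hb)
      · exact span_le_of_nonzero_inK hJi haJ hane (hK a haJ)
    · right
      push_neg at hK
      obtain ⟨b, hbJ, hbnK⟩ := hK
      have hC : ∃ c ∈ J, c (Sum.inl 2) ≠ 0 := by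
        by_cases h2 : b (Sum.inl 2) = 0
        · by_cases h0 : b (Sum.inl 0) = 0
          · have h1 : b (Sum.inl 1) ≠ 0 := fun h1 => hbnK (inK_of h0 h1 h2)
            refine ⟨br m (bas m (Sum.inl 0)) b, (hJi b hbJ _).2, ?_⟩
            rw [br_ap_inl2, bas_e_vals.1, bas_e_vals.2.1]
            simpa using h1
          · refine ⟨br m b (bas m (Sum.inl 1)), (hJi b hbJ _).1, ?_⟩
            rw [br_ap_inl2, bas_f_vals.1, bas_f_vals.2.1]
            simpa using h0
        · exact ⟨b, hbJ, h2⟩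
      obtain ⟨c, hcJ, hc2⟩ := hC
      exact eq_top_of_h_comp hm hJi hcJ hc2
  · -- [L,L] ≠ Isub
    intro hEq
    have hmem : bas m (Sum.inl 2) ∈ Submodule.span ℂ {a : Lm m | ∃ x y : Lm m, a = br m x y} :=
      Submodule.subset_span ⟨bas m (Sum.inl 0), bas m (Sum.inl 1), br_ef.symm⟩
    rw [hEq] at hmem
    have := inK_of_mem_span hmem 2
    rw [bas_ap_self] at this
    exact one_ne_zero this
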